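/- Let n ≥ 1 and let p, q : ℝ^n → [0,∞) be probability densities with respect to Lebesgue measure such that p = 0 almost everywhere on the set {q = 0} and ∫_{ℝ^n} p log(p/q) dz < ∞. Then the refined Csiszár–Kullback–Pinsker inequality holds: (1/2) ( ∫_{ℝ^n} |p − q| dz )² + ∫_{ℝ^n} (√p − √q)² dz ≤ 2 ∫_{ℝ^n} p log(p/q) dz. -/

import Mathlib

open MeasureTheory Real

/-! ### Auxiliary calculus lemmas -/

noncomputable def ckpG (x : ℝ) : ℝ := x * Real.log x - x + 1 - 3*(x-1)^2/(2*(x+2))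
noncomputable def ckpG1 (x : ℝ) : ℝ := Real.log x - 3*(x-1)*(x+5)/(2*(x+2)^2)

lemma ckp_hasDerivAt_G {x : ℝ} (hx : 0 < x) : HasDerivAt ckpG (ckpG1 x) x := by
  have h2 : (2:ℝ)*(x + 2) ≠ 0 := by positivity
  have h1 : HasDerivAt (fun y : ℝ => y * Real.log y) (Real.log x + 1) x := by
    have := (hasDerivAt_id' x).mul (Real.hasDerivAt_log hx.ne')
    exact this.congr_deriv (by rw [mul_inv_cancel₀ hx.ne']; ring)
  have h3 : HasDerivAt (fun y : ℝ => 3*(y-1)^2/(2*(y+2)))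
      (3*(x-1)*(x+5)/(2*(x+2)^2)) x := by
    have hnum : HasDerivAt (fun y : ℝ => 3*(y-1)^2) (6*(x-1)) x := by
      have := (((hasDerivAt_id x).sub_const 1).pow 2).const_mul (3:ℝ)
      exact this.congr_deriv (by simp only [id]; ring)
    have hden : HasDerivAt (fun y : ℝ => 2*((y:ℝ)+2)) 2 x := by
      have := ((hasDerivAt_id x).add_const 2).const_mul (2:ℝ)
      simpa using this
    have := hnum.div hden h2
    refine this.congr_deriv ?_
    field_simp
    ring
  have : HasDerivAt ckpG ((Real.log x + 1 - 1) - 3*(x-1)*(x+5)/(2*(x+2)^2)) x :=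
    ((h1.sub (hasDerivAt_id x)).add_const 1).sub h3
  simpa [ckpG1] using this

lemma ckp_hasDerivAt_G1 {x : ℝ} (hx : 0 < x) :
    HasDerivAt ckpG1 (x⁻¹ - 27/(x+2)^3) x := by
  have h2 : (2:ℝ)*(x + 2)^2 ≠ 0 := by positivity
  have hnum : HasDerivAt (fun y : ℝ => 3*(y-1)*(y+5)) (3*((x-1)+(x+5))) x := by
    have := (((hasDerivAt_id x).sub_const 1).const_mul 3).mul ((hasDerivAt_id x).add_const 5)
    exact this.congr_deriv (by simp only [id]; ring)
  have hden : HasDerivAt (fun y : ℝ => 2*((y:ℝ)+2)^2) (2*(2*(x+2))) x := by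
    have := (((hasDerivAt_id x).add_const 2).pow 2).const_mul (2:ℝ)
    exact this.congr_deriv (by simp only [id]; ring)
  have h3 := hnum.div hden h2
  have := (Real.hasDerivAt_log hx.ne').sub h3
  refine this.congr_deriv ?_
  have hx2 : (x+2) ≠ 0 := by positivity
  field_simp
  ring

lemma ckpG1_one : ckpG1 1 = 0 := by simp [ckpG1]

lemma ckpG1_mono : MonotoneOn ckpG1 (Set.Ioi (0:ℝ)) := by
  have hint : interior (Set.Ioi (0:ℝ)) = Set.Ioi 0 := interior_Ioi
  apply monotoneOn_of_deriv_nonneg (convex_Ioi 0)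
  · exact fun y hy => ((ckp_hasDerivAt_G1 hy).continuousAt).continuousWithinAt
  · rw [hint]; exact fun y hy => (ckp_hasDerivAt_G1 hy).differentiableAt.differentiableWithinAt
  · rw [hint]
    intro y hy
    rw [(ckp_hasDerivAt_G1 hy).deriv]
    have hy0 : (0:ℝ) < y := hy
    have h27 : 27*y ≤ (y+2)^3 := by nlinarith [sq_nonneg (y-1), hy0.le]
    have : 27/(y+2)^3 ≤ y⁻¹ := by
      rw [inv_eq_one_div, div_le_div_iff₀ (by positivity) hy0]
      nlinarith
    linarith

lemma ckpG_one : ckpG 1 = 0 := by norm_num [ckpG]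

lemma ckpG_nonneg {x : ℝ} (hx : 0 ≤ x) : 0 ≤ ckpG x := by
  rcases hx.eq_or_lt with h | hx0
  · norm_num [ckpG, ← h]
  rcases le_total x 1 with hle | hge
  · have hanti : AntitoneOn ckpG (Set.Ioc (0:ℝ) 1) := by
      have hint : interior (Set.Ioc (0:ℝ) 1) = Set.Ioo 0 1 := interior_Ioc
      apply antitoneOn_of_deriv_nonpos (convex_Ioc 0 1)
      · exact fun y hy => ((ckp_hasDerivAt_G hy.1).continuousAt).continuousWithinAt
      · rw [hint]; exact fun y hy => (ckp_hasDerivAt_G hy.1).differentiableAt.differentiableWithinAt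
      · rw [hint]
        intro y hy
        rw [(ckp_hasDerivAt_G hy.1).deriv]
        have := ckpG1_mono (Set.mem_Ioi.2 hy.1) (Set.mem_Ioi.2 one_pos) hy.2.le
        rw [ckpG1_one] at this
        exact this
    have := hanti (Set.mem_Ioc.2 ⟨hx0, hle⟩) (Set.mem_Ioc.2 ⟨one_pos, le_refl 1⟩) hle
    rw [ckpG_one] at this
    exact this
  · have hmono : MonotoneOn ckpG (Set.Ici (1:ℝ)) := by
      have hint : interior (Set.Ici (1:ℝ)) = Set.Ioi 1 := interior_Ici
      apply monotoneOn_of_deriv_nonneg (convex_Ici 1)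
      · exact fun y hy =>
          ((ckp_hasDerivAt_G (lt_of_lt_of_le one_pos hy)).continuousAt).continuousWithinAt
      · rw [hint]
        exact fun y hy =>
          (ckp_hasDerivAt_G (lt_trans one_pos hy)).differentiableAt.differentiableWithinAt
      · rw [hint]
        intro y hy
        rw [(ckp_hasDerivAt_G (lt_trans one_pos hy)).deriv]
        have := ckpG1_mono (Set.mem_Ioi.2 one_pos) (Set.mem_Ioi.2 (lt_trans one_pos hy))
          (le_of_lt hy)
        rw [ckpG1_one] at this
        exact this
    have := hmono (Set.mem_Ici.2 (le_refl 1)) (Set.mem_Ici.2 hge) hge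
    rw [ckpG_one] at this
    exact this

lemma ckp_pointwise_pinsker {a b : ℝ} (ha : 0 ≤ a) (hb : 0 < b) :
    (3/2) * ((a-b)^2/(a+2*b)) ≤ a * Real.log (a/b) - a + b := by
  have hx : (0:ℝ) ≤ a / b := div_nonneg ha hb.le
  have h := mul_le_mul_of_nonneg_left (ckpG_nonneg hx) hb.le
  set L := Real.log (a/b) with hL
  have hb0 : b ≠ 0 := hb.ne'
  have hd : a + 2*b ≠ 0 := by positivity
  have hd2 : a/b + 2 ≠ 0 := by positivity
  have key : b * ckpG (a/b) = (a * L - a + b) - (3/2) * ((a-b)^2/(a+2*b)) := by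
    simp only [ckpG, ← hL]
    field_simp
  rw [key, mul_zero] at h
  linarith

lemma ckp_pointwise_hellinger {a b : ℝ} (ha : 0 ≤ a) (hb : 0 < b) :
    2*a - 2*Real.sqrt (a*b) ≤ a * Real.log (a/b) := by
  rcases ha.eq_or_lt with h | ha0
  · simp [← h]
  have ht : 0 < Real.sqrt (b/a) := Real.sqrt_pos.2 (div_pos hb ha0)
  have hlog := Real.log_le_sub_one_of_pos ht
  have hls : Real.log (Real.sqrt (b/a)) = (1/2) * Real.log (b/a) := by
    rw [Real.log_sqrt (div_nonneg hb.le ha0.le)]; ring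
  have hba : Real.log (b/a) = - Real.log (a/b) := by
    rw [Real.log_div hb.ne' ha0.ne', Real.log_div ha0.ne' hb.ne']; ring
  have hsq : a * Real.sqrt (b/a) = Real.sqrt (a*b) := by
    rw [← Real.sqrt_sq ha0.le, ← Real.sqrt_mul (by positivity), Real.sqrt_sq ha0.le]
    congr 1
    field_simp
  rw [hls, hba] at hlog
  have h2 : 2 - 2 * Real.sqrt (b/a) ≤ Real.log (a/b) := by linarith
  have := mul_le_mul_of_nonneg_left h2 ha0.le
  calc 2*a - 2*Real.sqrt (a*b) = a * (2 - 2 * Real.sqrt (b/a)) := by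
        rw [mul_sub, ← hsq]; ring
    _ ≤ a * Real.log (a/b) := this

/-- Refined Csiszár–Kullback–Pinsker inequality: for probability densities `p, q` on `ℝ^n`
with `p = 0` a.e. on `{q = 0}` and finite relative entropy,
`(1/2) (∫ |p − q|)² + ∫ (√p − √q)² ≤ 2 ∫ p log(p/q)`. -/
theorem refined_csiszar_kullback_pinsker
    (n : ℕ) (hn : 1 ≤ n)
    (p q : EuclideanSpace ℝ (Fin n) → ℝ)
    (hp_meas : Measurable p) (hq_meas : Measurable q)
    (hp_nonneg : ∀ z, 0 ≤ p z) (hq_nonneg : ∀ z, 0 ≤ q z)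
    (hp_int : Integrable p) (hq_int : Integrable q)
    (hp_mass : ∫ z, p z = 1) (hq_mass : ∫ z, q z = 1)
    (habs : ∀ᵐ z, q z = 0 → p z = 0)
    (hrel : Integrable fun z => p z * Real.log (p z / q z)) :
    (1 / 2) * (∫ z, |p z - q z|) ^ 2
        + (∫ z, (Real.sqrt (p z) - Real.sqrt (q z)) ^ 2)
      ≤ 2 * ∫ z, p z * Real.log (p z / q z) := by
  set KL := ∫ z, p z * Real.log (p z / q z) with hKL_def
  -- the weighted quadratic function
  set D : EuclideanSpace ℝ (Fin n) → ℝ := fun z => (p z - q z)^2 / (p z + 2*q z) with hD_def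
  have hs_nonneg : ∀ z, 0 ≤ p z + 2*q z := fun z => by
    have := hp_nonneg z; have := hq_nonneg z; linarith
  have hD_nonneg : ∀ z, 0 ≤ D z := fun z => div_nonneg (sq_nonneg _) (hs_nonneg z)
  have hD_meas : Measurable D :=
    ((hp_meas.sub hq_meas).pow_const 2).div (hp_meas.add (hq_meas.const_mul 2))
  have hD_le : ∀ z, D z ≤ p z + q z := by
    intro z
    by_cases hs : p z + 2*q z = 0
    · have hq0 : q z = 0 := by have := hp_nonneg z; have := hq_nonneg z; linarith
      have hp0 : p z = 0 := by have := hp_nonneg z; linarith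
      simp [hD_def, hp0, hq0]
    · have hs' : 0 < p z + 2*q z := lt_of_le_of_ne (hs_nonneg z) (Ne.symm hs)
      rw [hD_def, div_le_iff₀ hs']
      nlinarith [mul_nonneg (hp_nonneg z) (hq_nonneg z), sq_nonneg (q z)]
  have hD_int : Integrable D := by
    refine (hp_int.add hq_int).mono' hD_meas.aestronglyMeasurable (ae_of_all _ fun z => ?_)
    rw [Real.norm_of_nonneg (hD_nonneg z)]
    exact hD_le z
  -- Step 1: (3/2) ∫ D ≤ KL
  have hae1 : ∀ᵐ z, (3/2) * D z ≤ p z * Real.log (p z / q z) - p z + q z := by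
    filter_upwards [habs] with z hz
    by_cases hq0 : q z = 0
    · have hp0 := hz hq0
      simp [hD_def, hp0, hq0]
    · exact ckp_pointwise_pinsker (hp_nonneg z) (lt_of_le_of_ne (hq_nonneg z) (Ne.symm hq0))
  have hstep1 : (3/2) * (∫ z, D z) ≤ KL := by
    have hF : Integrable (fun z => (3:ℝ)/2 * D z) volume := hD_int.const_mul _
    have hG : Integrable (fun z => p z * Real.log (p z / q z) - p z + q z) volume :=
      (hrel.sub hp_int).add hq_int
    have h := integral_mono_ae hF hG hae1
    have eL : ∫ z, ((3:ℝ)/2 * D z) = (3:ℝ)/2 * ∫ z, D z := integral_const_mul _ _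
    have e1 : ∫ z, (p z * Real.log (p z / q z) - p z + q z)
        = (∫ z, (p z * Real.log (p z / q z) - p z)) + ∫ z, q z :=
      integral_add (hrel.sub hp_int) hq_int
    have e2 : ∫ z, (p z * Real.log (p z / q z) - p z)
        = (∫ z, p z * Real.log (p z / q z)) - ∫ z, p z := integral_sub hrel hp_int
    rw [eL] at h
    rw [e1, e2, hp_mass, hq_mass, ← hKL_def] at h
    linarith
  -- Step 2: Cauchy–Schwarz
  set f : EuclideanSpace ℝ (Fin n) → ℝ :=
    fun z => |p z - q z| / Real.sqrt (p z + 2*q z) with hf_def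
  set g : EuclideanSpace ℝ (Fin n) → ℝ := fun z => Real.sqrt (p z + 2*q z) with hg_def
  have hf_meas : Measurable f :=
    ((hp_meas.sub hq_meas).abs).div (hp_meas.add (hq_meas.const_mul 2)).sqrt
  have hg_meas : Measurable g := (hp_meas.add (hq_meas.const_mul 2)).sqrt
  have hf_sq : ∀ z, f z ^ 2 = D z := by
    intro z
    rw [hf_def, hD_def]
    simp only
    rw [div_pow, Real.sq_sqrt (hs_nonneg z), sq_abs]
  have hg_sq : ∀ z, g z ^ 2 = p z + 2*q z := fun z => Real.sq_sqrt (hs_nonneg z)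
  have hfg : ∀ z, f z * g z = |p z - q z| := by
    intro z
    by_cases hs : p z + 2*q z = 0
    · have hq0 : q z = 0 := by have := hp_nonneg z; have := hq_nonneg z; linarith
      have hp0 : p z = 0 := by have := hp_nonneg z; linarith
      simp [hf_def, hg_def, hp0, hq0]
    · have hs' : 0 < p z + 2*q z := lt_of_le_of_ne (hs_nonneg z) (Ne.symm hs)
      exact div_mul_cancel₀ _ (Real.sqrt_ne_zero'.2 hs')
  have hf2_int : Integrable (fun z => f z ^ 2) := by
    have : (fun z => f z ^ 2) = D := funext hf_sq
    rw [this]; exact hD_int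
  have hg2_int : Integrable (fun z => g z ^ 2) := by
    have : (fun z => g z ^ 2) = fun z => p z + 2*q z := funext hg_sq
    rw [this]; exact hp_int.add (hq_int.const_mul 2)
  have hfL2 : MemLp f (ENNReal.ofReal 2) volume := by
    rw [show ENNReal.ofReal 2 = 2 by norm_num]
    exact (memLp_two_iff_integrable_sq hf_meas.aestronglyMeasurable).2 hf2_int
  have hgL2 : MemLp g (ENNReal.ofReal 2) volume := by
    rw [show ENNReal.ofReal 2 = 2 by norm_num]
    exact (memLp_two_iff_integrable_sq hg_meas.aestronglyMeasurable).2 hg2_int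
  have hconj : (2:ℝ).HolderConjugate 2 := Real.holderConjugate_iff.mpr ⟨one_lt_two, by norm_num⟩
  have hCS := integral_mul_le_Lp_mul_Lq_of_nonneg hconj
    (ae_of_all _ fun z => div_nonneg (abs_nonneg _) (Real.sqrt_nonneg _))
    (ae_of_all _ fun z => Real.sqrt_nonneg _) hfL2 hgL2
  have hrpow : ∀ h : EuclideanSpace ℝ (Fin n) → ℝ,
      (∫ z, h z ^ (2:ℝ)) = ∫ z, h z ^ 2 := by
    intro h
    congr 1
    funext z
    rw [show (2:ℝ) = ((2:ℕ):ℝ) by norm_num, Real.rpow_natCast]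
  rw [hrpow f, hrpow g] at hCS
  have hint_f2 : (∫ z, f z ^ 2) = ∫ z, D z := by
    congr 1; funext z; exact hf_sq z
  have hint_g2 : (∫ z, g z ^ 2) = 3 := by
    have : (∫ z, g z ^ 2) = ∫ z, p z + 2*q z := by congr 1; funext z; exact hg_sq z
    have e1 : ∫ z, (p z + 2*q z) = (∫ z, p z) + ∫ z, (2:ℝ)*q z :=
      integral_add hp_int (hq_int.const_mul 2)
    have e2 : ∫ z, (2:ℝ)*q z = 2 * ∫ z, q z := integral_const_mul _ _
    rw [this, e1, e2, hp_mass, hq_mass]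
    norm_num
  rw [hint_f2, hint_g2] at hCS
  have hint_fg : (∫ z, f z * g z) = ∫ z, |p z - q z| := by
    congr 1; funext z; exact hfg z
  rw [hint_fg] at hCS
  set T := ∫ z, |p z - q z| with hT_def
  set A := ∫ z, D z with hA_def
  have hA_nonneg : 0 ≤ A := integral_nonneg hD_nonneg
  have hT_nonneg : 0 ≤ T := integral_nonneg fun z => abs_nonneg _
  have hCS' : T ≤ Real.sqrt A * Real.sqrt 3 := by
    rw [Real.sqrt_eq_rpow, Real.sqrt_eq_rpow]
    exact hCS
  have hT2 : T^2 ≤ 3 * A := by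
    have h1 := pow_le_pow_left₀ hT_nonneg hCS' 2
    rw [mul_pow, Real.sq_sqrt hA_nonneg, Real.sq_sqrt (by norm_num : (0:ℝ) ≤ 3)] at h1
    linarith
  have hPinsker : T^2 ≤ 2 * KL := by nlinarith
  -- Step 3: Hellinger
  have hsqrtpq_meas : Measurable fun z => Real.sqrt (p z * q z) := (hp_meas.mul hq_meas).sqrt
  have hsqrtpq_int : Integrable fun z => Real.sqrt (p z * q z) := by
    have hbd : Integrable (fun z => (p z + q z)/2) volume := (hp_int.add hq_int).div_const 2
    refine hbd.mono' hsqrtpq_meas.aestronglyMeasurable (ae_of_all _ fun z => ?_)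
    rw [Real.norm_of_nonneg (Real.sqrt_nonneg _), Real.sqrt_mul (hp_nonneg z)]
    nlinarith [sq_nonneg (Real.sqrt (p z) - Real.sqrt (q z)),
      Real.sq_sqrt (hp_nonneg z), Real.sq_sqrt (hq_nonneg z),
      Real.sqrt_nonneg (p z), Real.sqrt_nonneg (q z)]
  have hae2 : ∀ᵐ z, 2*p z - 2*Real.sqrt (p z * q z) ≤ p z * Real.log (p z / q z) := by
    filter_upwards [habs] with z hz
    by_cases hq0 : q z = 0
    · have hp0 := hz hq0
      simp [hp0, hq0]
    · exact ckp_pointwise_hellinger (hp_nonneg z) (lt_of_le_of_ne (hq_nonneg z) (Ne.symm hq0))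
  set S := ∫ z, Real.sqrt (p z * q z) with hS_def
  have hstep2 : 2 - 2*S ≤ KL := by
    have hF : Integrable (fun z => 2*p z - 2*Real.sqrt (p z * q z)) volume :=
      (hp_int.const_mul 2).sub (hsqrtpq_int.const_mul 2)
    have h := integral_mono_ae hF hrel hae2
    have eL : ∫ z, (2*p z - 2*Real.sqrt (p z * q z))
        = (∫ z, (2:ℝ)*p z) - ∫ z, (2:ℝ)*Real.sqrt (p z * q z) :=
      integral_sub (hp_int.const_mul 2) (hsqrtpq_int.const_mul 2)
    have e1 : ∫ z, (2:ℝ)*p z = 2 * ∫ z, p z := integral_const_mul _ _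
    have e2 : ∫ z, (2:ℝ)*Real.sqrt (p z * q z) = 2 * S := by
      rw [integral_const_mul, ← hS_def]
    rw [eL, e1, e2, hp_mass, ← hKL_def] at h
    linarith
  have hH_eq : (∫ z, (Real.sqrt (p z) - Real.sqrt (q z)) ^ 2) = 2 - 2*S := by
    have hpt : ∀ z, (Real.sqrt (p z) - Real.sqrt (q z))^2
        = p z + q z - 2*Real.sqrt (p z * q z) := by
      intro z
      rw [sub_sq, Real.sq_sqrt (hp_nonneg z), Real.sq_sqrt (hq_nonneg z),
        Real.sqrt_mul (hp_nonneg z)]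
      ring
    have : (∫ z, (Real.sqrt (p z) - Real.sqrt (q z)) ^ 2)
        = ∫ z, (p z + q z - 2*Real.sqrt (p z * q z)) := by
      congr 1; funext z; exact hpt z
    have eL : ∫ z, (p z + q z - 2*Real.sqrt (p z * q z))
        = (∫ z, (p z + q z)) - ∫ z, (2:ℝ)*Real.sqrt (p z * q z) :=
      integral_sub (hp_int.add hq_int) (hsqrtpq_int.const_mul 2)
    have e1 : ∫ z, (p z + q z) = (∫ z, p z) + ∫ z, q z := integral_add hp_int hq_int
    have e2 : ∫ z, (2:ℝ)*Real.sqrt (p z * q z) = 2 * S := by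
      rw [integral_const_mul, ← hS_def]
    rw [this, eL, e1, e2, hp_mass, hq_mass]
    ring
  rw [hH_eq]
  linarith
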